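/- The conjectured differential value function satisfies the fixed-point functional equation on [b3,b4]: for every z∈[b3,b4], h̃(z) = H(((√5+1)/4)·z) − ((3−√5)/2)·z − ρ̃ + ((√5+1)/4)·z·h̃(3−√5) + (1 − ((√5+1)/4)·z)·h̃((1−z)/(1 − ((√5+1)/4)·z)), where the argument (1−z)/(1 − ((√5+1)/4)·z) lies in [b1,b4] so that h̃ is defined there, and h̃(3−√5) = ρ̃ + √5 − 2. -/

import Mathlib

/-- The binary entropy function with base-2 logarithms (equals 0 at 0 and 1). -/
noncomputable def binH (q : ℝ) : ℝ := -q * Real.logb 2 q - (1 - q) * Real.logb 2 (1 - q)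

noncomputable def b1 : ℝ := Real.sqrt 5 - 2
noncomputable def b2 : ℝ := (3 - Real.sqrt 5) / 2
noncomputable def b3 : ℝ := (Real.sqrt 5 - 1) / 2
noncomputable def b4 : ℝ := 3 - Real.sqrt 5

/-- The conjectured optimal average reward, `log₂` of the golden ratio. -/
noncomputable def ρt : ℝ := Real.logb 2 ((1 + Real.sqrt 5) / 2)

/-- The conjectured differential value function on `[b1, b4]`. -/
noncomputable def htilde (z : ℝ) : ℝ :=
  if z ≤ b2 then binH z - ρt * z + Real.logb 2 (Real.sqrt 5 - 1)
  else if z ≤ b3 then 1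
  else binH z + ρt * z + Real.logb 2 (3 - Real.sqrt 5)

lemma sq5 : Real.sqrt 5 ^ 2 = 5 := Real.sq_sqrt (by norm_num)
lemma s_gt : (2:ℝ) < Real.sqrt 5 := by nlinarith [sq5, Real.sqrt_nonneg 5]
lemma s_lt : Real.sqrt 5 < 7/3 := by nlinarith [sq5, Real.sqrt_nonneg 5]
lemma phi_pos : (0:ℝ) < (1 + Real.sqrt 5)/2 := by nlinarith [s_gt]
lemma log_of_mul {x y c : ℝ} (hx : 0 < x) (hy : 0 < y) (h : x * y = c) :
    Real.log x = Real.log c - Real.log y := by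
  rw [← h, Real.log_mul (ne_of_gt hx) (ne_of_gt hy)]; ring
lemma log_3s : Real.log (3 - Real.sqrt 5)
    = Real.log 2 - 2 * Real.log ((1 + Real.sqrt 5)/2) := by
  have := log_of_mul (x := 3 - Real.sqrt 5) (y := ((1 + Real.sqrt 5)/2)^2) (c := 2)
    (by nlinarith [s_lt]) (by positivity) (by nlinarith [sq5])
  rw [this, Real.log_pow]; push_cast; ring
lemma log_s2 : Real.log (Real.sqrt 5 - 2) = -3 * Real.log ((1 + Real.sqrt 5)/2) := by
  have := log_of_mul (x := Real.sqrt 5 - 2) (y := ((1 + Real.sqrt 5)/2)^3) (c := 1)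
    (by nlinarith [s_gt]) (by positivity) (by nlinarith [sq5, s_gt])
  rw [this, Real.log_pow, Real.log_one]; push_cast; ring
lemma log_s1 : Real.log (Real.sqrt 5 - 1)
    = Real.log 2 - Real.log ((1 + Real.sqrt 5)/2) := by
  have := log_of_mul (x := Real.sqrt 5 - 1) (y := (1 + Real.sqrt 5)/2) (c := 2)
    (by nlinarith [s_gt]) phi_pos (by nlinarith [sq5])
  rw [this]
lemma log_a : Real.log ((Real.sqrt 5 + 1)/4)
    = Real.log ((1 + Real.sqrt 5)/2) - Real.log 2 := by
  have := log_of_mul (x := (Real.sqrt 5 + 1)/4) (y := 2) (c := (1 + Real.sqrt 5)/2)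
    (by nlinarith [s_gt]) (by norm_num) (by ring)
  rw [this]
lemma log_1a : Real.log ((3 - Real.sqrt 5)/4)
    = -Real.log 2 - 2 * Real.log ((1 + Real.sqrt 5)/2) := by
  have := log_of_mul (x := (3 - Real.sqrt 5)/4) (y := 2 * ((1 + Real.sqrt 5)/2)^2) (c := 1)
    (by nlinarith [s_lt]) (by positivity) (by nlinarith [sq5])
  rw [this, Real.log_one, Real.log_mul (by norm_num) (by positivity), Real.log_pow]
  push_cast; ring
lemma L2_pos : (0:ℝ) < Real.log 2 := Real.log_pos (by norm_num)

/-- the third-branch formula, at z = b3, equals 1 -/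
lemma third_at_b3 : binH b3 + ρt * b3 + Real.logb 2 (3 - Real.sqrt 5) = 1 := by
  have hb3 : Real.log b3 = -Real.log ((1 + Real.sqrt 5)/2) := by
    unfold b3
    rw [show (Real.sqrt 5 - 1)/2 = (Real.sqrt 5 - 1)/2 from rfl,
      Real.log_div (by nlinarith [s_gt]) (by norm_num), log_s1]; ring
  have h1b3 : Real.log (1 - b3) = -2 * Real.log ((1 + Real.sqrt 5)/2) := by
    have : (1:ℝ) - b3 = (3 - Real.sqrt 5)/2 := by unfold b3; ring
    rw [this, Real.log_div (by nlinarith [s_lt]) (by norm_num), log_3s]; ring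
  unfold binH ρt Real.logb
  rw [hb3, h1b3, log_3s]
  unfold b3
  field_simp
  ring
lemma htilde_right {z : ℝ} (h1 : b3 ≤ z) (h2 : z ≤ b4) :
    htilde z = binH z + ρt * z + Real.logb 2 (3 - Real.sqrt 5) := by
  unfold htilde
  rw [if_neg (by unfold b2 b3 at *; nlinarith [s_gt])]
  rcases eq_or_lt_of_le h1 with h | h
  · rw [if_pos h.symm.le, ← h, third_at_b3]
  · rw [if_neg (not_le.mpr h)]

lemma htilde_b4 : htilde (3 - Real.sqrt 5) = ρt + Real.sqrt 5 - 2 := by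
  rw [htilde_right (z := 3 - Real.sqrt 5) (by unfold b3; nlinarith [s_lt]) (by unfold b4; exact le_refl _)]
  have hb4 : Real.log (3 - Real.sqrt 5) = Real.log 2 - 2 * Real.log ((1 + Real.sqrt 5)/2) := log_3s
  have h1b4 : Real.log (1 - (3 - Real.sqrt 5)) = -3 * Real.log ((1 + Real.sqrt 5)/2) := by
    rw [show (1:ℝ) - (3 - Real.sqrt 5) = Real.sqrt 5 - 2 by ring, log_s2]
  unfold binH ρt Real.logb
  rw [hb4, h1b4]
  field_simp
  ring

lemma key2 (s z L2 Lp Lz L1z Lu : ℝ) (hs : s^2 = 5) (hL2 : L2 ≠ 0) :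
  -z * (Lz / L2) - (1 - z) * (L1z / L2) + Lp / L2 * z + (L2 - 2*Lp)/L2 =
    -((s+1)/4*z) * ((Lp - L2 + Lz)/L2) - (1 - (s+1)/4*z) * (Lu/L2) - (3-s)/2*z - Lp/L2
    + (s+1)/4*z * (Lp/L2 + s - 2)
    + (-(1-z) * ((L1z - Lu)/L2) - (3-s)/4*z * ((-L2 - 2*Lp + Lz - Lu)/L2)
        + Lp/L2 * (1-z) + (1 - (s+1)/4*z) * ((L2 - 2*Lp)/L2)) := by
  field_simp
  linear_combination (-2 * z * L2) * hs

lemma key3 (A B P C x y u : ℝ) (hu : u ≠ 0) :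
  u * (-(x/u) * A - y/u * B + P * (x/u) + C) = -x*A - y*B + P*x + u*C := by
  field_simp

/-- The conjectured differential value function satisfies the fixed-point functional
equation on `[b3, b4]`, where the argument `(1-z)/(1 - ((√5+1)/4)z)` lies in `[b1, b4]`,
and `h̃(3-√5) = ρ̃ + √5 - 2`. -/
theorem htilde_fixed_point_equation :
    (∀ z ∈ Set.Icc b3 b4,
      (1 - z) / (1 - ((Real.sqrt 5 + 1) / 4) * z) ∈ Set.Icc b1 b4 ∧
      htilde z = binH (((Real.sqrt 5 + 1) / 4) * z) - ((3 - Real.sqrt 5) / 2) * z - ρt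
        + ((Real.sqrt 5 + 1) / 4) * z * htilde (3 - Real.sqrt 5)
        + (1 - ((Real.sqrt 5 + 1) / 4) * z)
            * htilde ((1 - z) / (1 - ((Real.sqrt 5 + 1) / 4) * z))) ∧
    htilde (3 - Real.sqrt 5) = ρt + Real.sqrt 5 - 2 := by
  refine ⟨fun z hz => ?_, htilde_b4⟩
  obtain ⟨hz1, hz2⟩ := hz
  simp only [b3, b4] at hz1 hz2
  have hzpos : 0 < z := by nlinarith [s_gt]
  have h1z : 0 < 1 - z := by nlinarith [s_gt]
  have hu : 0 < 1 - (Real.sqrt 5 + 1)/4 * z := by nlinarith [sq5, s_gt, s_lt]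
  have hw_lb : (Real.sqrt 5 - 1)/2 ≤ (1 - z) / (1 - ((Real.sqrt 5 + 1) / 4) * z) := by
    rw [le_div_iff₀ hu]; nlinarith [sq5]
  have hw_ub : (1 - z) / (1 - ((Real.sqrt 5 + 1) / 4) * z) ≤ 3 - Real.sqrt 5 := by
    rw [div_le_iff₀ hu]; nlinarith [sq5]
  refine ⟨⟨by unfold b1; nlinarith [sq5, s_gt], by unfold b4; exact hw_ub⟩, ?_⟩
  rw [htilde_b4,
    htilde_right (z := z) (by unfold b3; exact hz1) (by unfold b4; exact hz2),
    htilde_right (z := (1 - z) / (1 - (Real.sqrt 5 + 1) / 4 * z))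
      (by unfold b3; exact hw_lb) (by unfold b4; exact hw_ub)]
  have hlogaz : Real.log ((Real.sqrt 5 + 1)/4 * z)
      = Real.log ((1 + Real.sqrt 5)/2) - Real.log 2 + Real.log z := by
    rw [Real.log_mul (by nlinarith [s_gt]) (ne_of_gt hzpos), log_a]
  have hlogw : Real.log ((1 - z) / (1 - (Real.sqrt 5 + 1)/4 * z))
      = Real.log (1 - z) - Real.log (1 - (Real.sqrt 5 + 1)/4 * z) :=
    Real.log_div (ne_of_gt h1z) (ne_of_gt hu)
  have h1w : 1 - (1 - z) / (1 - (Real.sqrt 5 + 1)/4 * z)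
      = (3 - Real.sqrt 5)/4 * z / (1 - (Real.sqrt 5 + 1)/4 * z) := by
    rw [eq_div_iff (ne_of_gt hu), sub_mul, one_mul, div_mul_cancel₀ _ (ne_of_gt hu)]; ring
  have hlog1w : Real.log (1 - (1 - z) / (1 - (Real.sqrt 5 + 1)/4 * z))
      = -Real.log 2 - 2 * Real.log ((1 + Real.sqrt 5)/2) + Real.log z
        - Real.log (1 - (Real.sqrt 5 + 1)/4 * z) := by
    rw [h1w, Real.log_div (by nlinarith [s_lt]) (ne_of_gt hu),
      Real.log_mul (by nlinarith [s_lt]) (ne_of_gt hzpos), log_1a]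
  unfold binH ρt
  simp only [Real.logb]
  rw [hlogaz, hlog1w, hlogw, h1w, log_3s]
  have hL2 : Real.log 2 ≠ 0 := ne_of_gt L2_pos
  have hun : 1 - (Real.sqrt 5 + 1)/4 * z ≠ 0 := ne_of_gt hu
  set s := Real.sqrt 5 with hsdef
  set L2 := Real.log 2 with hL2def
  set Lp := Real.log ((1 + s)/2) with hLpdef
  set Lz := Real.log z with hLzdef
  set L1z := Real.log (1 - z) with hL1zdef
  set Lu := Real.log (1 - (s + 1)/4 * z) with hLudef
  have hs5 : s^2 = 5 := sq5
  have hL2 : L2 ≠ 0 := ne_of_gt L2_pos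
  have hun : 1 - (s + 1)/4 * z ≠ 0 := ne_of_gt hu
  rw [key3 ((L1z - Lu)/L2) ((-L2 - 2*Lp + Lz - Lu)/L2) (Lp/L2) ((L2 - 2*Lp)/L2)
    (1 - z) ((3-s)/4*z) (1 - (s+1)/4*z) hun]
  exact key2 s z L2 Lp Lz L1z Lu hs5 hL2
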